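/- Let X be a normed space, Ω ⊂ ℝⁿ with finite measure, q > 1, and f : Ω × ℝ → ℝ satisfy |f(x,t)| ≤ a(1+|t|^{q−1}). Let (uₙ) be bounded in X with uₙ ⇀ u weakly in X, uₙ → u in L^q(Ω) and in L¹(Ω). If the duality pairings satisfy ⟨uₙ, uₙ − u⟩ = ⟨J'(uₙ), uₙ − u⟩ + ∫_Ω f(x,uₙ)(uₙ − u)dx with ‖J'(uₙ)‖_* → 0 and X is a Hilbert space, then uₙ → u strongly in X. -/

import Mathlib

open MeasureTheory Filter
open scoped RealInnerProductSpace Topology ENNReal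

/-- Palais–Smale/Cerami argument: if `(uₙ)` is bounded in a Hilbert space `X` (embedded
via `T` into functions on `Ω` of finite measure), converges weakly to `v`, converges to
`T v` in `L^q` and `L¹`, `f` has growth `|f(x,t)| ≤ a(1+|t|^{q−1})`, the identity
`⟪uₙ, uₙ − v⟫ = ⟨J'(uₙ), uₙ − v⟩ + ∫ f(x,uₙ)(uₙ − v)` holds with `‖J'(uₙ)‖_* → 0`,
then `uₙ → v` strongly in `X`. -/
theorem strong_convergence_from_PS
    {Ω X : Type*} [MeasurableSpace Ω] (μ : Measure Ω) [IsFiniteMeasure μ]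
    [NormedAddCommGroup X] [InnerProductSpace ℝ X]
    (T : X → Ω → ℝ) (f : Ω → ℝ → ℝ) (a q : ℝ) (ha : 0 < a) (hq : 1 < q)
    (hf : ∀ x, ∀ t : ℝ, |f x t| ≤ a * (1 + |t| ^ (q - 1)))
    (u : ℕ → X) (v : X) (M : ℝ)
    (hbdd : ∀ k, ‖u k‖ ≤ M)
    (hweak : ∀ w : X, Tendsto (fun k => ⟪u k, w⟫) atTop (𝓝 ⟪v, w⟫))
    (hmem : ∀ k, MemLp (T (u k)) (ENNReal.ofReal q) μ)
    (hmemv : MemLp (T v) (ENNReal.ofReal q) μ)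
    (hfmeas : ∀ k, AEStronglyMeasurable (fun x => f x (T (u k) x)) μ)
    (hLq : Tendsto (fun k => eLpNorm (T (u k) - T v) (ENNReal.ofReal q) μ)
      atTop (𝓝 0))
    (hL1 : Tendsto (fun k => eLpNorm (T (u k) - T v) 1 μ) atTop (𝓝 0))
    (D : ℕ → X →L[ℝ] ℝ)
    (hD : Tendsto (fun k => ‖D k‖) atTop (𝓝 0))
    (hident : ∀ k, ⟪u k, u k - v⟫ =
      D k (u k - v) + ∫ x, f x (T (u k) x) * (T (u k) x - T v x) ∂μ) :
    Tendsto u atTop (𝓝 v) := by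
  have hq0 : (0:ℝ) < q := lt_trans one_pos hq
  set qE : ℝ≥0∞ := ENNReal.ofReal q with hqEdef
  have hqE0 : qE ≠ 0 := by
    simp [hqEdef, ENNReal.ofReal_eq_zero, not_le, hq0]
  have hqEtop : qE ≠ ∞ := ENNReal.ofReal_ne_top
  have hqE1 : (1:ℝ≥0∞) ≤ qE := by
    rw [hqEdef, ENNReal.one_le_ofReal]; exact hq.le
  set p : ℝ := q / (q - 1) with hp
  have hqp : q.HolderConjugate p := Real.HolderConjugate.conjExponent hq
  have hpq : p.HolderConjugate q := hqp.symm
  -- measurability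
  have hum : ∀ k, AEMeasurable (T (u k)) μ := fun k => (hmem k).1.aemeasurable
  have hvm : AEMeasurable (T v) μ := hmemv.1.aemeasurable
  have hwm : ∀ k, AEMeasurable (fun x => T (u k) x - T v x) μ :=
    fun k => (hum k).sub hvm
  have habs : ∀ {g : Ω → ℝ}, AEMeasurable g μ → AEMeasurable (fun x => |g x|) μ := by
    intro g hg
    simpa [Real.norm_eq_abs] using hg.norm
  -- eLpNorm at exponent q as a lintegral of ofReal |·|
  have eLq : ∀ g : Ω → ℝ,
      eLpNorm g qE μ = (∫⁻ x, ENNReal.ofReal |g x| ^ q ∂μ) ^ (1/q) := by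
    intro g
    rw [eLpNorm_eq_lintegral_rpow_enorm_toReal hqE0 hqEtop]
    simp [hqEdef, ENNReal.toReal_ofReal hq0.le, Real.enorm_eq_ofReal_abs]
  have eL1 : ∀ g : Ω → ℝ,
      eLpNorm g 1 μ = ∫⁻ x, ENNReal.ofReal |g x| ∂μ := by
    intro g
    rw [eLpNorm_one_eq_lintegral_enorm]
    simp [Real.enorm_eq_ofReal_abs]
  -- the integral term and its lintegral bound
  set I : ℕ → ℝ := fun k => ∫ x, f x (T (u k) x) * (T (u k) x - T v x) ∂μ with hIdef
  set L : ℕ → ℝ≥0∞ :=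
    fun k => ∫⁻ x, ENNReal.ofReal ‖f x (T (u k) x) * (T (u k) x - T v x)‖ ∂μ with hLdef
  have hIL : ∀ k, |I k| ≤ (L k).toReal := by
    intro k
    simpa [hIdef, hLdef, Real.norm_eq_abs] using
      norm_integral_le_lintegral_norm (μ := μ)
        (f := fun x => f x (T (u k) x) * (T (u k) x - T v x))
  -- Hölder bound for the nonlinear term
  have hHolder : ∀ k,
      (∫⁻ x, ENNReal.ofReal (|T (u k) x| ^ (q-1)) * ENNReal.ofReal |T (u k) x - T v x| ∂μ)
        ≤ (eLpNorm (T (u k)) qE μ) ^ (q-1) *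
          eLpNorm (fun x => T (u k) x - T v x) qE μ := by
    intro k
    have hfm : AEMeasurable (fun x => ENNReal.ofReal (|T (u k) x| ^ (q-1))) μ :=
      ENNReal.measurable_ofReal.comp_aemeasurable
        ((habs (hum k)).pow_const _)
    have hgm : AEMeasurable (fun x => ENNReal.ofReal |T (u k) x - T v x|) μ :=
      ENNReal.measurable_ofReal.comp_aemeasurable (habs (hwm k))
    have H := ENNReal.lintegral_mul_le_Lp_mul_Lq μ hpq hfm hgm
    have e1 : ∀ x : Ω, (ENNReal.ofReal (|T (u k) x| ^ (q-1))) ^ p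
        = ENNReal.ofReal |T (u k) x| ^ q := by
      intro x
      rw [← ENNReal.ofReal_rpow_of_nonneg (abs_nonneg _) (by linarith : (0:ℝ) ≤ q - 1),
        ← ENNReal.rpow_mul, hqp.sub_one_mul_conj]
    simp only [Pi.mul_apply] at H
    calc (∫⁻ x, ENNReal.ofReal (|T (u k) x| ^ (q-1))
            * ENNReal.ofReal |T (u k) x - T v x| ∂μ)
        ≤ (∫⁻ x, ENNReal.ofReal (|T (u k) x| ^ (q-1)) ^ p ∂μ) ^ (1/p)
          * (∫⁻ x, ENNReal.ofReal |T (u k) x - T v x| ^ q ∂μ) ^ (1/q) := H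
      _ = (∫⁻ x, ENNReal.ofReal |T (u k) x| ^ q ∂μ) ^ (1/p)
          * eLpNorm (fun x => T (u k) x - T v x) qE μ := by
          rw [eLq]
          congr 1
          exact congrArg (· ^ (1/p)) (by simp only [e1])
      _ = (eLpNorm (T (u k)) qE μ) ^ (q-1)
          * eLpNorm (fun x => T (u k) x - T v x) qE μ := by
          congr 1
          rw [eLq, ← ENNReal.rpow_mul]
          congr 1
          rw [hp, one_div_div]
          ring
  -- pointwise bound and splitting of L
  have hLbound : ∀ k, L k ≤ ENNReal.ofReal a *
      (eLpNorm (fun x => T (u k) x - T v x) 1 μ +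
        (eLpNorm (T (u k)) qE μ) ^ (q-1) *
          eLpNorm (fun x => T (u k) x - T v x) qE μ) := by
    intro k
    have hpt : ∀ x, ENNReal.ofReal ‖f x (T (u k) x) * (T (u k) x - T v x)‖
        ≤ ENNReal.ofReal a * (ENNReal.ofReal |T (u k) x - T v x|
          + ENNReal.ofReal (|T (u k) x| ^ (q-1)) * ENNReal.ofReal |T (u k) x - T v x|) := by
      intro x
      rw [← ENNReal.ofReal_mul (by positivity), ← ENNReal.ofReal_add (abs_nonneg _)
        (by positivity), ← ENNReal.ofReal_mul ha.le]
      apply ENNReal.ofReal_le_ofReal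
      rw [Real.norm_eq_abs, abs_mul]
      calc |f x (T (u k) x)| * |T (u k) x - T v x|
          ≤ (a * (1 + |T (u k) x| ^ (q-1))) * |T (u k) x - T v x| :=
            mul_le_mul_of_nonneg_right (hf x _) (abs_nonneg _)
        _ = a * (|T (u k) x - T v x|
            + |T (u k) x| ^ (q-1) * |T (u k) x - T v x|) := by ring
    have hm1 : AEMeasurable (fun x => ENNReal.ofReal |T (u k) x - T v x|) μ :=
      ENNReal.measurable_ofReal.comp_aemeasurable (habs (hwm k))
    have hm2 : AEMeasurable
        (fun x => ENNReal.ofReal (|T (u k) x| ^ (q-1))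
          * ENNReal.ofReal |T (u k) x - T v x|) μ :=
      (ENNReal.measurable_ofReal.comp_aemeasurable ((habs (hum k)).pow_const _)).mul hm1
    calc L k ≤ ∫⁻ x, ENNReal.ofReal a * (ENNReal.ofReal |T (u k) x - T v x|
          + ENNReal.ofReal (|T (u k) x| ^ (q-1))
            * ENNReal.ofReal |T (u k) x - T v x|) ∂μ := lintegral_mono hpt
      _ = ENNReal.ofReal a * ((∫⁻ x, ENNReal.ofReal |T (u k) x - T v x| ∂μ)
          + ∫⁻ x, ENNReal.ofReal (|T (u k) x| ^ (q-1))
            * ENNReal.ofReal |T (u k) x - T v x| ∂μ) := by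
          rw [lintegral_const_mul' _ _ ENNReal.ofReal_ne_top, lintegral_add_left' hm1]
      _ ≤ ENNReal.ofReal a * (eLpNorm (fun x => T (u k) x - T v x) 1 μ +
          (eLpNorm (T (u k)) qE μ) ^ (q-1) *
            eLpNorm (fun x => T (u k) x - T v x) qE μ) := by
          apply mul_le_mul_right
          apply add_le_add
          · rw [eL1]
          · exact hHolder k
  -- eventual bound on ‖T (u k)‖_q
  set C : ℝ≥0∞ := 1 + eLpNorm (T v) qE μ with hCdef
  have hCtop : C ≠ ∞ := by
    rw [hCdef]
    exact ENNReal.add_ne_top.mpr ⟨ENNReal.one_ne_top, hmemv.2.ne⟩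
  have hCpow : C ^ (q-1) ≠ ∞ :=
    (ENNReal.rpow_lt_top_of_nonneg (by linarith) hCtop).ne
  have hev : ∀ᶠ k in atTop, eLpNorm (T (u k)) qE μ ≤ C := by
    filter_upwards [hLq.eventually (eventually_le_nhds (by norm_num : (0:ℝ≥0∞) < 1))]
      with k hk
    calc eLpNorm (T (u k)) qE μ
        = eLpNorm ((T (u k) - T v) + T v) qE μ := by
          congr 1; ext x; simp
      _ ≤ eLpNorm (T (u k) - T v) qE μ + eLpNorm (T v) qE μ :=
          eLpNorm_add_le ((hmem k).1.sub hmemv.1) hmemv.1 hqE1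
      _ ≤ 1 + eLpNorm (T v) qE μ := add_le_add_left hk _
  -- L tends to 0
  have hL0 : Tendsto L atTop (𝓝 0) := by
    have hR : Tendsto (fun k => ENNReal.ofReal a *
        (eLpNorm (fun x => T (u k) x - T v x) 1 μ +
          C ^ (q-1) * eLpNorm (fun x => T (u k) x - T v x) qE μ)) atTop (𝓝 0) := by
      have h1 : Tendsto (fun k => eLpNorm (fun x => T (u k) x - T v x) 1 μ) atTop (𝓝 0) := hL1
      have h2 : Tendsto (fun k => C ^ (q-1) *
          eLpNorm (fun x => T (u k) x - T v x) qE μ) atTop (𝓝 0) := by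
        have h := ENNReal.Tendsto.const_mul (a := C ^ (q-1)) hLq (Or.inr hCpow)
        rw [mul_zero] at h; exact h
      have h3 := ENNReal.Tendsto.const_mul (a := ENNReal.ofReal a) (h1.add h2)
        (Or.inr ENNReal.ofReal_ne_top)
      simpa using h3
    apply tendsto_of_tendsto_of_tendsto_of_le_of_le' tendsto_const_nhds hR
    · exact Eventually.of_forall fun k => zero_le
    · filter_upwards [hev] with k hk
      refine (hLbound k).trans ?_
      exact mul_le_mul_right (add_le_add_right
        (mul_le_mul_left (ENNReal.rpow_le_rpow hk (by linarith)) _) _) _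
  -- the integral term tends to 0
  have hI0 : Tendsto I atTop (𝓝 0) := by
    apply squeeze_zero_norm (fun k => by simpa [Real.norm_eq_abs] using hIL k)
    have := (ENNReal.tendsto_toReal (by simp : (0:ℝ≥0∞) ≠ ∞)).comp hL0
    simp at this; exact this
  -- the D term tends to 0
  have hD0 : Tendsto (fun k => D k (u k - v)) atTop (𝓝 0) := by
    refine squeeze_zero_norm (a := fun k => ‖D k‖ * (M + ‖v‖)) (fun k => ?_) ?_
    · calc ‖D k (u k - v)‖ ≤ ‖D k‖ * ‖u k - v‖ := (D k).le_opNorm _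
        _ ≤ ‖D k‖ * (M + ‖v‖) := by
            apply mul_le_mul_of_nonneg_left _ (norm_nonneg _)
            calc ‖u k - v‖ ≤ ‖u k‖ + ‖v‖ := norm_sub_le _ _
              _ ≤ M + ‖v‖ := add_le_add_left (hbdd k) _
    · simpa using hD.mul_const (M + ‖v‖)
  -- the weak-convergence term tends to 0
  have hW0 : Tendsto (fun k => ⟪v, u k - v⟫) atTop (𝓝 0) := by
    have h1 : Tendsto (fun k => ⟪u k, v⟫ - ⟪v, v⟫) atTop (𝓝 (⟪v, v⟫ - ⟪v, v⟫)) :=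
      (hweak v).sub tendsto_const_nhds
    rw [sub_self] at h1
    refine h1.congr fun k => ?_
    rw [inner_sub_right, real_inner_comm]
  -- conclude: ‖u k - v‖² → 0
  have hsq : Tendsto (fun k => ‖u k - v‖ ^ 2) atTop (𝓝 0) := by
    have hkey : ∀ k, ‖u k - v‖ ^ 2 = D k (u k - v) + I k - ⟪v, u k - v⟫ := by
      intro k
      rw [← real_inner_self_eq_norm_sq, inner_sub_left, hident k]
    have := (hD0.add hI0).sub hW0
    rw [add_zero, sub_zero] at this
    exact this.congr fun k => (hkey k).symm
  rw [tendsto_iff_norm_sub_tendsto_zero]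
  have := hsq.sqrt
  rw [Real.sqrt_zero] at this
  refine this.congr fun k => ?_
  rw [Real.sqrt_sq (norm_nonneg _)]
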